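/- arXiv:1103.5906 — 2 statements merged into one kernel-verified Lean document; each statement's English description precedes it below -/
import Mathlib

section
/- Let K = ℚ(√5). On the elliptic curve over K defined by y² = x³ + (281880√5 − 630315)x + 328392630 − 146861640√5, the point (264√5 − 585, 5076√5 − 11340) is a torsion point of order 15. -/
open WeierstrassCurve Polynomial

private lemma aux_ne {K : Type*} [Field K] [CharZero K] {s : K} (hs : s ^ 2 = 5) (a b : K)
    {x y : K} (hd : x - y = b * s - a) (h : b ^ 2 * 5 ≠ a ^ 2) : x ≠ y := by
  intro he
  apply h
  have h0 : b * s - a = 0 := by rw [← hd, he, sub_self]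
  have hb : b * s = a := by linear_combination h0
  calc b ^ 2 * 5 = (b * s) ^ 2 := by rw [mul_pow, hs]
    _ = a ^ 2 := by rw [hb]

private lemma some_congr' {K : Type*} [Field K] {W : WeierstrassCurve.Affine K}
    {x₁ y₁ x₂ y₂ : K} {h₁ : W.Nonsingular x₁ y₁} (hx : x₁ = x₂) (hy : y₁ = y₂)
    (h₂ : W.Nonsingular x₂ y₂) :
    WeierstrassCurve.Affine.Point.some _ _ h₁ = WeierstrassCurve.Affine.Point.some _ _ h₂ := by
  subst hx; subst hy; rfl

private lemma add_some {K : Type*} [Field K] [DecidableEq K] {W : WeierstrassCurve.Affine K}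
    {x₁ y₁ x₂ y₂ x₃ y₃ : K} {h₁ : W.Nonsingular x₁ y₁} {h₂ : W.Nonsingular x₂ y₂}
    (h₃ : W.Nonsingular x₃ y₃) (hxy : x₁ = x₂ → y₁ ≠ W.negY x₂ y₂)
    (hX : W.addX x₁ x₂ (W.slope x₁ x₂ y₁ y₂) = x₃)
    (hY : W.addY x₁ x₂ y₁ (W.slope x₁ x₂ y₁ y₂) = y₃) :
    WeierstrassCurve.Affine.Point.some _ _ h₁ + WeierstrassCurve.Affine.Point.some _ _ h₂ =
      WeierstrassCurve.Affine.Point.some _ _ h₃ := by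
  rw [WeierstrassCurve.Affine.Point.add_some (fun h => hxy h.1 h.2)]
  exact some_congr' hX hY h₃

open Classical in
/-- K = ℚ(√(5)); the given point is a torsion point of order 15. -/
theorem stmt_6 {K : Type*} [Field K] [Algebra ℚ K] (s : K) (hs : s ^ 2 = 5)
    (hK : ∀ x : K, ∃ a b : ℚ, x = algebraMap ℚ K a + algebraMap ℚ K b * s) :
    ∃ h : WeierstrassCurve.Affine.Nonsingular (⟨0, 0, 0, 281880 * s - 630315, 328392630 - 146861640 * s⟩ : WeierstrassCurve.Affine K) (264 * s - 585) (5076 * s - 11340),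
      addOrderOf (WeierstrassCurve.Affine.Point.some _ _ h) = 15 := by
  haveI : CharZero K := charZero_of_injective_algebraMap (algebraMap ℚ K).injective
  set W : WeierstrassCurve.Affine K :=
    ⟨0, 0, 0, 281880 * s - 630315, 328392630 - 146861640 * s⟩ with hW
  have ha1 : W.a₁ = 0 := rfl
  have ha2 : W.a₂ = 0 := rfl
  have ha3 : W.a₃ = 0 := rfl
  have ha4 : W.a₄ = 281880 * s - 630315 := rfl
  have ha6 : W.a₆ = 328392630 - 146861640 * s := rfl
  have hneg : ∀ x y : K, W.negY x y = -y := fun x y => by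
    simp only [WeierstrassCurve.Affine.negY, ha1, ha3]; ring
  -- nonsingularity of the seven relevant points
  have hns : ∀ x y a b : K, y ^ 2 - (x ^ 3 + (281880 * s - 630315) * x +
      (328392630 - 146861640 * s)) = (a + b * s) * (s ^ 2 - 5) →
      y - W.negY x y ≠ 0 → W.Nonsingular x y := by
    intro x y a b heq hy
    rw [WeierstrassCurve.Affine.nonsingular_iff, WeierstrassCurve.Affine.equation_iff,
      ha1, ha2, ha3, ha4, ha6]
    refine ⟨by linear_combination heq + (a + b * s) * hs, Or.inr fun h => hy ?_⟩
    rw [hneg]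
    linear_combination h
  have hy1 : (5076 * s - 11340 : K) ≠ W.negY (264 * s - 585) (5076 * s - 11340) := by
    rw [hneg]; exact aux_ne hs 22680 10152 (by ring) (by norm_num)
  have hy2 : (251640 - 112536 * s : K) ≠ W.negY (3195 - 1428 * s) (251640 - 112536 * s) := by
    rw [hneg]; exact aux_ne hs (-503280) (-225072) (by ring) (by norm_num)
  have hy4 : (29700 - 13284 * s : K) ≠ W.negY (855 - 384 * s) (29700 - 13284 * s) := by
    rw [hneg]; exact aux_ne hs (-59400) (-26568) (by ring) (by norm_num)
  have hy3 : (7344 * s - 16416 : K) ≠ W.negY (84 * s - 189) (7344 * s - 16416) := by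
    rw [hneg]; exact aux_ne hs 32832 14688 (by ring) (by norm_num)
  have hy5 : (4104 * s - 9180 : K) ≠ W.negY (135 - 60 * s) (4104 * s - 9180) := by
    rw [hneg]; exact aux_ne hs 18360 8208 (by ring) (by norm_num)
  have hy7 : (2376 * s - 5400 : K) ≠ W.negY (315 - 132 * s) (2376 * s - 5400) := by
    rw [hneg]; exact aux_ne hs 10800 4752 (by ring) (by norm_num)
  have hy8 : (5400 - 2376 * s : K) ≠ W.negY (315 - 132 * s) (5400 - 2376 * s) := by
    rw [hneg]; exact aux_ne hs (-10800) (-4752) (by ring) (by norm_num)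
  have h1 : W.Nonsingular (264 * s - 585) (5076 * s - 11340) :=
    hns _ _ 73665936 (-18399744) (by ring) (sub_ne_zero.mpr hy1)
  have h2 : W.Nonsingular (3195 - 1428 * s) (251640 - 112536 * s) :=
    hns _ _ (-6478702704) 2911954752 (by ring) (sub_ne_zero.mpr hy2)
  have h3 : W.Nonsingular (84 * s - 189) (7344 * s - 16416) :=
    hns _ _ 34257168 (-592704) (by ring) (sub_ne_zero.mpr hy3)
  have h4 : W.Nonsingular (855 - 384 * s) (29700 - 13284 * s) :=
    hns _ _ (-93518064) 56623104 (by ring) (sub_ne_zero.mpr hy4)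
  have h5 : W.Nonsingular (135 - 60 * s) (4104 * s - 9180) :=
    hns _ _ 32297616 216000 (by ring) (sub_ne_zero.mpr hy5)
  have h7 : W.Nonsingular (315 - 132 * s) (2376 * s - 5400) :=
    hns _ _ 26387856 2299968 (by ring) (sub_ne_zero.mpr hy7)
  have h8 : W.Nonsingular (315 - 132 * s) (5400 - 2376 * s) :=
    hns _ _ 26387856 2299968 (by ring) (sub_ne_zero.mpr hy8)
  -- x-coordinate disequalities
  have hx21 : (3195 - 1428 * s : K) ≠ 264 * s - 585 :=
    aux_ne hs (-3780) (-1692) (by ring) (by norm_num)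
  have hx41 : (855 - 384 * s : K) ≠ 264 * s - 585 :=
    aux_ne hs (-1440) (-648) (by ring) (by norm_num)
  have hx43 : (855 - 384 * s : K) ≠ 84 * s - 189 :=
    aux_ne hs (-1044) (-468) (by ring) (by norm_num)
  -- slopes
  have hl2 : W.slope (264 * s - 585) (264 * s - 585) (5076 * s - 11340) (5076 * s - 11340)
      = -30 + 15 * s := by
    rw [WeierstrassCurve.Affine.slope_of_Y_ne rfl hy1, div_eq_iff (sub_ne_zero.mpr hy1),
      hneg, ha1, ha2, ha4]
    linear_combination (56808 : K) * hs
  have hl4 : W.slope (3195 - 1428 * s) (3195 - 1428 * s) (251640 - 112536 * s)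
      (251640 - 112536 * s) = 60 - 27 * s := by
    rw [WeierstrassCurve.Affine.slope_of_Y_ne rfl hy2, div_eq_iff (sub_ne_zero.mpr hy2),
      hneg, ha1, ha2, ha4]
    linear_combination (40608 : K) * hs
  have hl8 : W.slope (855 - 384 * s) (855 - 384 * s) (29700 - 13284 * s) (29700 - 13284 * s)
      = 30 - 15 * s := by
    rw [WeierstrassCurve.Affine.slope_of_Y_ne rfl hy4, div_eq_iff (sub_ne_zero.mpr hy4),
      hneg, ha1, ha2, ha4]
    linear_combination (43848 : K) * hs
  have hl3 : W.slope (3195 - 1428 * s) (264 * s - 585) (251640 - 112536 * s)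
      (5076 * s - 11340) = 36 - 15 * s := by
    rw [WeierstrassCurve.Affine.slope_of_X_ne hx21, div_eq_iff (sub_ne_zero.mpr hx21)]
    linear_combination (-25380 : K) * hs
  have hl5 : W.slope (855 - 384 * s) (264 * s - 585) (29700 - 13284 * s)
      (5076 * s - 11340) = 15 - 6 * s := by
    rw [WeierstrassCurve.Affine.slope_of_X_ne hx41, div_eq_iff (sub_ne_zero.mpr hx41)]
    linear_combination (-3888 : K) * hs
  have hl7 : W.slope (855 - 384 * s) (84 * s - 189) (29700 - 13284 * s)
      (7344 * s - 16416) = 24 - 9 * s := by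
    rw [WeierstrassCurve.Affine.slope_of_X_ne hx43, div_eq_iff (sub_ne_zero.mpr hx43)]
    linear_combination (-4212 : K) * hs
  -- coordinates of sums
  have hX2 : W.addX (264 * s - 585) (264 * s - 585)
      (W.slope (264 * s - 585) (264 * s - 585) (5076 * s - 11340) (5076 * s - 11340))
      = 3195 - 1428 * s := by
    rw [hl2]; simp only [WeierstrassCurve.Affine.addX, ha1, ha2]
    linear_combination (225 : K) * hs
  have hY2 : W.addY (264 * s - 585) (264 * s - 585) (5076 * s - 11340)
      (W.slope (264 * s - 585) (264 * s - 585) (5076 * s - 11340) (5076 * s - 11340))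
      = 251640 - 112536 * s := by
    simp only [WeierstrassCurve.Affine.addY, WeierstrassCurve.Affine.negAddY]
    rw [hX2, hl2, hneg]
    linear_combination (25380 : K) * hs
  have hX4 : W.addX (3195 - 1428 * s) (3195 - 1428 * s)
      (W.slope (3195 - 1428 * s) (3195 - 1428 * s) (251640 - 112536 * s) (251640 - 112536 * s))
      = 855 - 384 * s := by
    rw [hl4]; simp only [WeierstrassCurve.Affine.addX, ha1, ha2]
    linear_combination (729 : K) * hs
  have hY4 : W.addY (3195 - 1428 * s) (3195 - 1428 * s) (251640 - 112536 * s)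
      (W.slope (3195 - 1428 * s) (3195 - 1428 * s) (251640 - 112536 * s) (251640 - 112536 * s))
      = 29700 - 13284 * s := by
    simp only [WeierstrassCurve.Affine.addY, WeierstrassCurve.Affine.negAddY]
    rw [hX4, hl4, hneg]
    linear_combination (28188 : K) * hs
  have hX8 : W.addX (855 - 384 * s) (855 - 384 * s)
      (W.slope (855 - 384 * s) (855 - 384 * s) (29700 - 13284 * s) (29700 - 13284 * s))
      = 315 - 132 * s := by
    rw [hl8]; simp only [WeierstrassCurve.Affine.addX, ha1, ha2]
    linear_combination (225 : K) * hs
  have hY8 : W.addY (855 - 384 * s) (855 - 384 * s) (29700 - 13284 * s)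
      (W.slope (855 - 384 * s) (855 - 384 * s) (29700 - 13284 * s) (29700 - 13284 * s))
      = 5400 - 2376 * s := by
    simp only [WeierstrassCurve.Affine.addY, WeierstrassCurve.Affine.negAddY]
    rw [hX8, hl8, hneg]
    linear_combination (3780 : K) * hs
  have hX3 : W.addX (3195 - 1428 * s) (264 * s - 585)
      (W.slope (3195 - 1428 * s) (264 * s - 585) (251640 - 112536 * s) (5076 * s - 11340))
      = 84 * s - 189 := by
    rw [hl3]; simp only [WeierstrassCurve.Affine.addX, ha1, ha2]
    linear_combination (225 : K) * hs
  have hY3 : W.addY (3195 - 1428 * s) (264 * s - 585) (251640 - 112536 * s)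
      (W.slope (3195 - 1428 * s) (264 * s - 585) (251640 - 112536 * s) (5076 * s - 11340))
      = 7344 * s - 16416 := by
    simp only [WeierstrassCurve.Affine.addY, WeierstrassCurve.Affine.negAddY]
    rw [hX3, hl3, hneg]
    linear_combination (22680 : K) * hs
  have hX5 : W.addX (855 - 384 * s) (264 * s - 585)
      (W.slope (855 - 384 * s) (264 * s - 585) (29700 - 13284 * s) (5076 * s - 11340))
      = 135 - 60 * s := by
    rw [hl5]; simp only [WeierstrassCurve.Affine.addX, ha1, ha2]
    linear_combination (36 : K) * hs
  have hY5 : W.addY (855 - 384 * s) (264 * s - 585) (29700 - 13284 * s)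
      (W.slope (855 - 384 * s) (264 * s - 585) (29700 - 13284 * s) (5076 * s - 11340))
      = 4104 * s - 9180 := by
    simp only [WeierstrassCurve.Affine.addY, WeierstrassCurve.Affine.negAddY]
    rw [hX5, hl5, hneg]
    linear_combination (1944 : K) * hs
  have hX7 : W.addX (855 - 384 * s) (84 * s - 189)
      (W.slope (855 - 384 * s) (84 * s - 189) (29700 - 13284 * s) (7344 * s - 16416))
      = 315 - 132 * s := by
    rw [hl7]; simp only [WeierstrassCurve.Affine.addX, ha1, ha2]
    linear_combination (81 : K) * hs
  have hY7 : W.addY (855 - 384 * s) (84 * s - 189) (29700 - 13284 * s)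
      (W.slope (855 - 384 * s) (84 * s - 189) (29700 - 13284 * s) (7344 * s - 16416))
      = 2376 * s - 5400 := by
    simp only [WeierstrassCurve.Affine.addY, WeierstrassCurve.Affine.negAddY]
    rw [hX7, hl7, hneg]
    linear_combination (2268 : K) * hs
  -- the group computations
  set Q : W.Point := WeierstrassCurve.Affine.Point.some _ _ h1 with hQ
  have e2 : Q + Q = WeierstrassCurve.Affine.Point.some _ _ h2 :=
    add_some h2 (fun _ => hy1) hX2 hY2
  have e4 : WeierstrassCurve.Affine.Point.some _ _ h2 + WeierstrassCurve.Affine.Point.some _ _ h2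
      = WeierstrassCurve.Affine.Point.some _ _ h4 := add_some h4 (fun _ => hy2) hX4 hY4
  have e8 : WeierstrassCurve.Affine.Point.some _ _ h4 + WeierstrassCurve.Affine.Point.some _ _ h4
      = WeierstrassCurve.Affine.Point.some _ _ h8 := add_some h8 (fun _ => hy4) hX8 hY8
  have e3 : WeierstrassCurve.Affine.Point.some _ _ h2 + Q
      = WeierstrassCurve.Affine.Point.some _ _ h3 :=
    add_some h3 (fun h => absurd h hx21) hX3 hY3
  have e5 : WeierstrassCurve.Affine.Point.some _ _ h4 + Q
      = WeierstrassCurve.Affine.Point.some _ _ h5 :=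
    add_some h5 (fun h => absurd h hx41) hX5 hY5
  have e7 : WeierstrassCurve.Affine.Point.some _ _ h4 + WeierstrassCurve.Affine.Point.some _ _ h3
      = WeierstrassCurve.Affine.Point.some _ _ h7 :=
    add_some h7 (fun h => absurd h hx43) hX7 hY7
  have e0 : WeierstrassCurve.Affine.Point.some _ _ h8 + WeierstrassCurve.Affine.Point.some _ _ h7
      = 0 := by
    refine WeierstrassCurve.Affine.Point.add_of_Y_eq rfl ?_
    rw [hneg]; ring
  have n2 : (2 : ℕ) • Q = WeierstrassCurve.Affine.Point.some _ _ h2 := by rw [two_nsmul, e2]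
  have n3 : (3 : ℕ) • Q = WeierstrassCurve.Affine.Point.some _ _ h3 := by
    rw [show (3 : ℕ) = 2 + 1 from rfl, add_nsmul, n2, one_nsmul, e3]
  have n4 : (4 : ℕ) • Q = WeierstrassCurve.Affine.Point.some _ _ h4 := by
    rw [show (4 : ℕ) = 2 + 2 from rfl, add_nsmul, n2, e4]
  have n5 : (5 : ℕ) • Q = WeierstrassCurve.Affine.Point.some _ _ h5 := by
    rw [show (5 : ℕ) = 4 + 1 from rfl, add_nsmul, n4, one_nsmul, e5]
  have n7 : (7 : ℕ) • Q = WeierstrassCurve.Affine.Point.some _ _ h7 := by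
    rw [show (7 : ℕ) = 4 + 3 from rfl, add_nsmul, n4, n3, e7]
  have n8 : (8 : ℕ) • Q = WeierstrassCurve.Affine.Point.some _ _ h8 := by
    rw [show (8 : ℕ) = 4 + 4 from rfl, add_nsmul, n4, e8]
  have n15 : (15 : ℕ) • Q = 0 := by
    rw [show (15 : ℕ) = 8 + 7 from rfl, add_nsmul, n8, n7, e0]
  refine ⟨h1, ?_⟩
  have hdvd : addOrderOf Q ∣ 15 := addOrderOf_dvd_of_nsmul_eq_zero n15
  have hd3 : ¬ addOrderOf Q ∣ 3 := fun h => by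
    have := addOrderOf_dvd_iff_nsmul_eq_zero.mp h
    rw [n3] at this
    exact WeierstrassCurve.Affine.Point.some_ne_zero h3 this
  have hd5 : ¬ addOrderOf Q ∣ 5 := fun h => by
    have := addOrderOf_dvd_iff_nsmul_eq_zero.mp h
    rw [n5] at this
    exact WeierstrassCurve.Affine.Point.some_ne_zero h5 this
  have hle : addOrderOf Q ≤ 15 := Nat.le_of_dvd (by norm_num) hdvd
  obtain ⟨n, hn⟩ : ∃ n, addOrderOf Q = n := ⟨_, rfl⟩
  rw [hn] at hdvd hd3 hd5 hle ⊢
  interval_cases n <;> first | rfl | (exfalso; revert hdvd hd3 hd5; decide)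
end

section
/- Let K = ℚ(√−15). On the elliptic curve over K defined by y² = x³ + 272133x + 41173974, the point (3 − 144√−15, −6480 − 432√−15) is a torsion point of order 16. -/
open WeierstrassCurve Polynomial

private lemma some_eq_some' {F : Type*} [Field F] {W : WeierstrassCurve.Affine F}
    {x₁ y₁ x₂ y₂ : F} (hx : x₁ = x₂) (hy : y₁ = y₂)
    (h₁ : W.Nonsingular x₁ y₁) (h₂ : W.Nonsingular x₂ y₂) :
    WeierstrassCurve.Affine.Point.some _ _ h₁ = WeierstrassCurve.Affine.Point.some _ _ h₂ := by
  subst hx; subst hy; rfl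

open Classical in
/-- K = ℚ(√(-15)); the given point is a torsion point of order 16. -/
theorem stmt_7 {K : Type*} [Field K] [Algebra ℚ K] (s : K) (hs : s ^ 2 = -15)
    (hK : ∀ x : K, ∃ a b : ℚ, x = algebraMap ℚ K a + algebraMap ℚ K b * s) :
    ∃ h : WeierstrassCurve.Affine.Nonsingular (⟨0, 0, 0, 272133, 41173974⟩ : WeierstrassCurve.Affine K) (3 - 144 * s) (-6480 - 432 * s),
      addOrderOf (WeierstrassCurve.Affine.Point.some _ _ h) = 16 := by
  haveI : CharZero K := charZero_of_injective_algebraMap (algebraMap ℚ K).injective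
  set W : WeierstrassCurve.Affine K := ⟨0, 0, 0, 272133, 41173974⟩ with hW
  have ha1 : W.a₁ = 0 := rfl
  have ha2 : W.a₂ = 0 := rfl
  have ha3 : W.a₃ = 0 := rfl
  have ha4 : W.a₄ = 272133 := rfl
  have ha6 : W.a₆ = 41173974 := rfl
  have hs15 : s ≠ -15 := by
    intro h
    rw [h] at hs
    norm_num at hs
  -- the points
  have hP : W.Nonsingular (3 - 144 * s) (-6480 - 432 * s) := by
    rw [WeierstrassCurve.Affine.nonsingular_iff', WeierstrassCurve.Affine.equation_iff,
      ha1, ha2, ha3, ha4, ha6]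
    constructor
    · linear_combination (2985984 * s) * hs
    · right
      intro h
      exact hs15 (by linear_combination (-1/864 : K) * h)
  have hP2 : W.Nonsingular 2163 (-103680) := by
    rw [WeierstrassCurve.Affine.nonsingular_iff', WeierstrassCurve.Affine.equation_iff,
      ha1, ha2, ha3, ha4, ha6]
    norm_num
  have hP4 : W.Nonsingular 435 (-15552) := by
    rw [WeierstrassCurve.Affine.nonsingular_iff', WeierstrassCurve.Affine.equation_iff,
      ha1, ha2, ha3, ha4, ha6]
    norm_num
  have hP8 : W.Nonsingular (-141) 0 := by
    rw [WeierstrassCurve.Affine.nonsingular_iff', WeierstrassCurve.Affine.equation_iff,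
      ha1, ha2, ha3, ha4, ha6]
    norm_num
  -- step 1 : P + P = P2
  have hy1 : (-6480 - 432 * s) ≠ W.negY (3 - 144 * s) (-6480 - 432 * s) := by
    rw [WeierstrassCurve.Affine.negY, ha1, ha3]
    intro h
    exact hs15 (by linear_combination (-1/864 : K) * h)
  have hL1 : W.slope (3 - 144 * s) (3 - 144 * s) (-6480 - 432 * s) (-6480 - 432 * s)
      = 48 - 3 * s := by
    rw [WeierstrassCurve.Affine.slope_of_Y_ne rfl hy1, WeierstrassCurve.Affine.negY,
      ha1, ha2, ha3, ha4]
    have hd : (-6480 - 432 * s - (-(-6480 - 432 * s) - 0 * (3 - 144 * s) - 0)) ≠ 0 := by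
      intro h
      exact hs15 (by linear_combination (-1/864 : K) * h)
    rw [div_eq_iff hd]
    linear_combination (59616 : K) * hs
  have e1 : WeierstrassCurve.Affine.Point.some _ _ hP + WeierstrassCurve.Affine.Point.some _ _ hP
      = WeierstrassCurve.Affine.Point.some _ _ hP2 := by
    rw [WeierstrassCurve.Affine.Point.add_self_of_Y_ne hy1]
    refine some_eq_some' ?_ ?_ _ _
    · rw [WeierstrassCurve.Affine.addX, hL1, ha1, ha2]
      linear_combination (9 : K) * hs
    · rw [WeierstrassCurve.Affine.addY, WeierstrassCurve.Affine.negY,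
        WeierstrassCurve.Affine.negAddY, WeierstrassCurve.Affine.addX, hL1, ha1, ha2, ha3]
      linear_combination (27 * s) * hs
  -- step 2 : P2 + P2 = P4
  have hy2 : (-103680 : K) ≠ W.negY 2163 (-103680) := by
    rw [WeierstrassCurve.Affine.negY, ha1, ha3]
    norm_num
  have hL2 : W.slope 2163 2163 (-103680) (-103680) = -69 := by
    rw [WeierstrassCurve.Affine.slope_of_Y_ne rfl hy2, WeierstrassCurve.Affine.negY,
      ha1, ha2, ha3, ha4]
    norm_num
  have e2 : WeierstrassCurve.Affine.Point.some _ _ hP2 + WeierstrassCurve.Affine.Point.some _ _ hP2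
      = WeierstrassCurve.Affine.Point.some _ _ hP4 := by
    rw [WeierstrassCurve.Affine.Point.add_self_of_Y_ne hy2]
    refine some_eq_some' ?_ ?_ _ _
    · rw [WeierstrassCurve.Affine.addX, hL2, ha1, ha2]; norm_num
    · rw [WeierstrassCurve.Affine.addY, WeierstrassCurve.Affine.negY,
        WeierstrassCurve.Affine.negAddY, WeierstrassCurve.Affine.addX, hL2, ha1, ha2, ha3]
      norm_num
  -- step 3 : P4 + P4 = P8
  have hy4 : (-15552 : K) ≠ W.negY 435 (-15552) := by
    rw [WeierstrassCurve.Affine.negY, ha1, ha3]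
    norm_num
  have hL4 : W.slope 435 435 (-15552) (-15552) = -27 := by
    rw [WeierstrassCurve.Affine.slope_of_Y_ne rfl hy4, WeierstrassCurve.Affine.negY,
      ha1, ha2, ha3, ha4]
    norm_num
  have e4 : WeierstrassCurve.Affine.Point.some _ _ hP4 + WeierstrassCurve.Affine.Point.some _ _ hP4
      = WeierstrassCurve.Affine.Point.some _ _ hP8 := by
    rw [WeierstrassCurve.Affine.Point.add_self_of_Y_ne hy4]
    refine some_eq_some' ?_ ?_ _ _
    · rw [WeierstrassCurve.Affine.addX, hL4, ha1, ha2]; norm_num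
    · rw [WeierstrassCurve.Affine.addY, WeierstrassCurve.Affine.negY,
        WeierstrassCurve.Affine.negAddY, WeierstrassCurve.Affine.addX, hL4, ha1, ha2, ha3]
      norm_num
  -- step 4 : P8 + P8 = 0
  have e8 : WeierstrassCurve.Affine.Point.some _ _ hP8 + WeierstrassCurve.Affine.Point.some _ _ hP8
      = 0 := by
    refine WeierstrassCurve.Affine.Point.add_self_of_Y_eq ?_
    rw [WeierstrassCurve.Affine.negY, ha1, ha3]
    norm_num
  -- assemble
  refine ⟨hP, ?_⟩
  set P : W.Point := WeierstrassCurve.Affine.Point.some _ _ hP with hPdef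
  have s2 : (2 : ℕ) • P = WeierstrassCurve.Affine.Point.some _ _ hP2 := by
    rw [two_nsmul]; exact e1
  have s4 : (4 : ℕ) • P = WeierstrassCurve.Affine.Point.some _ _ hP4 := by
    rw [show (4 : ℕ) = 2 * 2 from rfl, mul_smul, s2, two_nsmul]; exact e2
  have s8 : (8 : ℕ) • P = WeierstrassCurve.Affine.Point.some _ _ hP8 := by
    rw [show (8 : ℕ) = 2 * 4 from rfl, mul_smul, s4, two_nsmul]; exact e4
  have s16 : (16 : ℕ) • P = 0 := by
    rw [show (16 : ℕ) = 2 * 8 from rfl, mul_smul, s8, two_nsmul]; exact e8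
  haveI : Fact (Nat.Prime 2) := ⟨Nat.prime_two⟩
  have h8ne : ¬ ((2 : ℕ) ^ 3 • P = 0) := by
    rw [show (2 : ℕ) ^ 3 = 8 from rfl, s8]
    exact WeierstrassCurve.Affine.Point.some_ne_zero hP8
  have h16 : (2 : ℕ) ^ (3 + 1) • P = 0 := by
    rw [show (2 : ℕ) ^ (3 + 1) = 16 from rfl]; exact s16
  have := addOrderOf_eq_prime_pow h8ne h16
  simpa using this
end
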